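/- Let n ≥ 2 be an integer and α a real number with α > −n/2. Define I₁ = ∫_0^π sin^{n−2}φ dφ · ∫_0^{π/2} ((n+α) cos²θ − α)² sin^{n−1}θ cos^{n−1+2α}θ dθ and I₂ = (n+α)² ∫_0^π sin^{n−2}φ cos²φ dφ · ∫_0^{π/2} sin^{n+1}θ cos^{n+1+2α}θ dθ. Then I₁ / I₂ = n(n+2)/(n+2α); in particular I₁ ≥ I₂ if and only if α ≤ n(n+1)/2. -/

import Mathlib

open MeasureTheory Real Set intervalIntegral
open scoped Interval

noncomputable def Jsc (p : ℕ) (q : ℝ) : ℝ := ∫ θ in (0:ℝ)..(π/2), Real.sin θ ^ p * Real.cos θ ^ q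

lemma integrable_sc (p : ℕ) {q : ℝ} (hq : -1 < q) :
    IntervalIntegrable (fun θ : ℝ => Real.sin θ ^ p * Real.cos θ ^ q) volume 0 (π/2) := by
  rcases le_or_gt 0 q with h | h
  · exact (((Real.continuous_sin.pow p).mul
      ((Real.continuous_rpow_const h).comp Real.continuous_cos))).intervalIntegrable _ _
  · -- q < 0 case
    have hpi : (0:ℝ) < π / 2 := by positivity
    -- measurability
    have hg : Measurable fun θ : ℝ => Real.sin θ ^ p * Real.exp (Real.log (Real.cos θ) * q) :=
      (Real.measurable_sin.pow_const p).mul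
        ((Real.measurable_exp.comp ((Real.measurable_log.comp Real.measurable_cos).mul_const q)))
    have hae : ∀ᵐ θ ∂(volume.restrict (Ι (0:ℝ) (π/2))), θ ≠ π/2 := by
      apply ae_mono Measure.restrict_le_self
      rw [mem_ae_iff]
      convert Real.volume_singleton (a := π/2) using 2
      ext x
      simp
    have hmem : ∀ᵐ θ ∂(volume.restrict (Ι (0:ℝ) (π/2))), θ ∈ Ι (0:ℝ) (π/2) :=
      self_mem_ae_restrict measurableSet_uIoc
    have hmeas : AEStronglyMeasurable (fun θ : ℝ => Real.sin θ ^ p * Real.cos θ ^ q)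
        (volume.restrict (Ι (0:ℝ) (π/2))) := by
      refine hg.aestronglyMeasurable.congr ?_
      filter_upwards [hae, hmem] with θ hne hmemθ
      rw [Set.uIoc_of_le hpi.le] at hmemθ
      have hcos : 0 < Real.cos θ := by
        apply Real.cos_pos_of_mem_Ioo
        constructor
        · linarith [hmemθ.1, hpi]
        · exact lt_of_le_of_ne hmemθ.2 hne
      rw [Real.rpow_def_of_pos hcos]
    -- dominating function
    have hint : IntervalIntegrable (fun θ : ℝ => (2/π * (π/2 - θ)) ^ q) volume 0 (π/2) := by
      have h1 : IntervalIntegrable (fun x : ℝ => x ^ q) volume 0 1 :=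
        intervalIntegral.intervalIntegrable_rpow' hq
      have h2 : IntervalIntegrable (fun x : ℝ => ((2/π) * x) ^ q) volume (0 / (2/π)) (1 / (2/π)) :=
        h1.comp_mul_left (c := 2/π)
      have hπ : (2:ℝ)/π ≠ 0 := by positivity
      have h3 : IntervalIntegrable (fun x : ℝ => ((2/π) * x) ^ q) volume 0 (π/2) := by
        have : (1:ℝ) / (2/π) = π/2 := by field_simp
        simpa [this] using h2
      simpa using (h3.comp_sub_left (π/2)).symm
    refine hint.mono_fun hmeas ?_
    filter_upwards [hmem] with θ hmemθ
    rw [Set.uIoc_of_le hpi.le] at hmemθ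
    obtain ⟨h0, h2⟩ := hmemθ
    have hcosnn : 0 ≤ Real.cos θ := Real.cos_nonneg_of_mem_Icc ⟨by linarith, h2⟩
    have hsin : 0 ≤ Real.sin θ ^ p :=
      pow_nonneg (Real.sin_nonneg_of_nonneg_of_le_pi h0.le (by linarith [Real.pi_pos])) p
    have hsin1 : Real.sin θ ^ p ≤ 1 := pow_le_one₀ (Real.sin_nonneg_of_nonneg_of_le_pi h0.le (by linarith [Real.pi_pos])) (Real.sin_le_one θ)
    have hbnd : Real.cos θ ^ q ≤ (2/π * (π/2 - θ)) ^ q := by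
      rcases eq_or_lt_of_le h2 with he | hlt
      · rw [he]
        simp [Real.cos_pi_div_two, Real.zero_rpow (show q ≠ 0 by linarith)]
      · have hlow : 0 < 2/π * (π/2 - θ) := by
          have := Real.pi_pos
          apply mul_pos (by positivity)
          linarith
        have hle : 2/π * (π/2 - θ) ≤ Real.cos θ := by
          have := Real.one_sub_mul_le_cos h0.le h2
          have hπ := Real.pi_pos
          calc 2/π * (π/2 - θ) = 1 - 2/π * θ := by field_simp
            _ ≤ Real.cos θ := Real.one_sub_mul_le_cos h0.le h2
        exact Real.rpow_le_rpow_of_nonpos hlow hle h.le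
    have h1 : ‖Real.sin θ ^ p * Real.cos θ ^ q‖ = Real.sin θ ^ p * Real.cos θ ^ q := by
      rw [Real.norm_eq_abs, abs_of_nonneg (mul_nonneg hsin (Real.rpow_nonneg hcosnn q))]
    rw [h1]
    calc Real.sin θ ^ p * Real.cos θ ^ q ≤ 1 * Real.cos θ ^ q := by
          exact mul_le_mul_of_nonneg_right hsin1 (Real.rpow_nonneg hcosnn q)
      _ = Real.cos θ ^ q := one_mul _
      _ ≤ (2/π * (π/2 - θ)) ^ q := hbnd
      _ ≤ ‖(2/π * (π/2 - θ)) ^ q‖ := le_abs_self _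

lemma Jsc_pos (p : ℕ) {q : ℝ} (hq : -1 < q) : 0 < Jsc p q := by
  apply intervalIntegral.intervalIntegral_pos_of_pos_on (integrable_sc p hq)
  · intro x hx
    have hπ := Real.pi_pos
    have hs : 0 < Real.sin x := Real.sin_pos_of_pos_of_lt_pi hx.1 (by linarith [hx.2])
    have hc : 0 < Real.cos x := Real.cos_pos_of_mem_Ioo ⟨by linarith [hx.1], hx.2⟩
    exact mul_pos (pow_pos hs p) (Real.rpow_pos_of_pos hc q)
  · positivity

lemma Jsc_rec (p : ℕ) {q : ℝ} (hq : -1 < q) :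
    ((p : ℝ) + 1) * Jsc p (q + 2) = (q + 1) * Jsc (p + 2) q := by
  have hπ := Real.pi_pos
  have hq1 : (0:ℝ) < q + 1 := by linarith
  set f' : ℝ → ℝ := fun θ =>
    ((p : ℝ) + 1) * (Real.sin θ ^ p * Real.cos θ ^ (q + 2)) -
      (q + 1) * (Real.sin θ ^ (p + 2) * Real.cos θ ^ q) with hf'
  set F : ℝ → ℝ := fun θ => Real.sin θ ^ (p + 1) * Real.cos θ ^ (q + 1) with hF
  have hcont : ContinuousOn F (Set.Icc 0 (π/2)) := by
    apply Continuous.continuousOn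
    exact (Real.continuous_sin.pow (p+1)).mul
      ((Real.continuous_rpow_const hq1.le).comp Real.continuous_cos)
  have hderiv : ∀ x ∈ Set.Ioo (0:ℝ) (π/2), HasDerivWithinAt F (f' x) (Set.Ioi x) x := by
    intro x hx
    have hc : 0 < Real.cos x := Real.cos_pos_of_mem_Ioo ⟨by linarith [hx.1], hx.2⟩
    have h1 : HasDerivAt (fun θ : ℝ => Real.sin θ ^ (p + 1))
        (((p : ℝ) + 1) * Real.sin x ^ p * Real.cos x) x := by
      have := (Real.hasDerivAt_sin x).fun_pow (p + 1)
      simpa using this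
    have h2 : HasDerivAt (fun θ : ℝ => Real.cos θ ^ (q + 1))
        (-Real.sin x * (q + 1) * Real.cos x ^ (q + 1 - 1)) x :=
      (Real.hasDerivAt_cos x).rpow_const (Or.inl hc.ne')
    have h3 := h1.fun_mul h2
    apply HasDerivAt.hasDerivWithinAt
    convert h3 using 1
    · rfl
    have e1 : Real.cos x ^ (q + 2) = Real.cos x ^ (q + 1) * Real.cos x := by
      rw [show q + 2 = (q + 1) + 1 by ring, Real.rpow_add_one hc.ne']
    have e2 : Real.cos x ^ (q + 1) = Real.cos x ^ q * Real.cos x := by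
      rw [Real.rpow_add_one hc.ne']
    have e3 : q + 1 - 1 = q := by ring
    simp only [hf', e3, e1, e2]
    ring
  have hint : IntervalIntegrable f' volume 0 (π/2) :=
    ((integrable_sc p (by linarith : (-1:ℝ) < q + 2)).const_mul _).sub
      ((integrable_sc (p + 2) hq).const_mul _)
  have hFTC := intervalIntegral.integral_eq_sub_of_hasDeriv_right_of_le
    (by linarith : (0:ℝ) ≤ π/2) hcont hderiv hint
  have hF0 : F 0 = 0 := by simp [hF]
  have hFpi : F (π/2) = 0 := by
    simp [hF, Real.cos_pi_div_two, Real.zero_rpow hq1.ne']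
  rw [hF0, hFpi, sub_zero] at hFTC
  have hsplit : ∫ θ in (0:ℝ)..(π/2), f' θ =
      ((p : ℝ) + 1) * Jsc p (q + 2) - (q + 1) * Jsc (p + 2) q := by
    rw [hf']
    rw [intervalIntegral.integral_sub ((integrable_sc p (by linarith)).const_mul _)
      ((integrable_sc (p + 2) hq).const_mul _),
      intervalIntegral.integral_const_mul, intervalIntegral.integral_const_mul]
    rfl
  rw [hsplit] at hFTC
  linarith [hFTC]

lemma Jsc_split (p : ℕ) {q : ℝ} (hq : -1 < q) :
    Jsc (p + 2) q = Jsc p q - Jsc p (q + 2) := by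
  have hπ := Real.pi_pos
  have hcongr : Jsc (p + 2) q =
      ∫ θ in (0:ℝ)..(π/2), (Real.sin θ ^ p * Real.cos θ ^ q - Real.sin θ ^ p * Real.cos θ ^ (q + 2)) := by
    apply intervalIntegral.integral_congr
    intro θ hθ
    rw [Set.uIcc_of_le (by linarith : (0:ℝ) ≤ π/2)] at hθ
    show Real.sin θ ^ (p + 2) * Real.cos θ ^ q =
      Real.sin θ ^ p * Real.cos θ ^ q - Real.sin θ ^ p * Real.cos θ ^ (q + 2)
    have hcos : 0 ≤ Real.cos θ := Real.cos_nonneg_of_mem_Icc ⟨by linarith [hθ.1], hθ.2⟩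
    rcases eq_or_lt_of_le hcos with he | hc
    · rw [← he]
      simp only [Real.zero_rpow (show q + 2 ≠ 0 by linarith), mul_zero, sub_zero]
      have hs2 : Real.sin θ ^ 2 = 1 := by nlinarith [Real.sin_sq_add_cos_sq θ]
      rw [pow_add, hs2, mul_one]
    · have e1 : Real.cos θ ^ (q + 2) = Real.cos θ ^ q * Real.cos θ ^ 2 := by
        rw [Real.rpow_add hc, Real.rpow_two]
      have e2 := Real.sin_sq_add_cos_sq θ
      rw [e1, pow_add]
      linear_combination (Real.sin θ ^ p * Real.cos θ ^ q) * e2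
  rw [hcongr, intervalIntegral.integral_sub (integrable_sc p hq)
    (integrable_sc p (by linarith))]
  rfl

lemma Jsc_succ (p : ℕ) {q : ℝ} (hq : -1 < q) :
    ((p : ℝ) + q + 2) * Jsc p (q + 2) = (q + 1) * Jsc p q := by
  have h1 := Jsc_rec p hq
  have h2 := Jsc_split p hq
  rw [h2] at h1
  linear_combination h1

lemma Jsc_def (p : ℕ) (q : ℝ) :
    Jsc p q = ∫ θ in (0:ℝ)..(π/2), Real.sin θ ^ p * Real.cos θ ^ q := rfl

set_option maxHeartbeats 1000000 in
/-- For `n ≥ 2`, `α > −n/2`, with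
`I₁ = ∫₀^π sin^{n−2}φ dφ · ∫₀^{π/2} ((n+α)cos²θ − α)² sin^{n−1}θ cos^{n−1+2α}θ dθ` and
`I₂ = (n+α)² ∫₀^π sin^{n−2}φ cos²φ dφ · ∫₀^{π/2} sin^{n+1}θ cos^{n+1+2α}θ dθ`,
one has `I₁/I₂ = n(n+2)/(n+2α)`; in particular `I₁ ≥ I₂ ↔ α ≤ n(n+1)/2`. -/
theorem stmt_16 (n : ℕ) (hn : 2 ≤ n) (α : ℝ) (hα : -((n : ℝ) / 2) < α)
    (I₁ I₂ : ℝ)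
    (hI₁ : I₁ = (∫ φ in (0:ℝ)..Real.pi, Real.sin φ ^ (n - 2)) *
      ∫ θ in (0:ℝ)..(Real.pi / 2),
        (((n : ℝ) + α) * Real.cos θ ^ 2 - α) ^ 2 * Real.sin θ ^ (n - 1) *
          Real.cos θ ^ ((n : ℝ) - 1 + 2 * α))
    (hI₂ : I₂ = ((n : ℝ) + α) ^ 2 *
        (∫ φ in (0:ℝ)..Real.pi, Real.sin φ ^ (n - 2) * Real.cos φ ^ 2) *
        ∫ θ in (0:ℝ)..(Real.pi / 2),
          Real.sin θ ^ (n + 1) * Real.cos θ ^ ((n : ℝ) + 1 + 2 * α)) :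
    I₁ / I₂ = (n : ℝ) * (n + 2) / ((n : ℝ) + 2 * α) ∧
      (I₂ ≤ I₁ ↔ α ≤ (n : ℝ) * (n + 1) / 2) := by
  obtain ⟨k, rfl⟩ : ∃ k, n = k + 2 := ⟨n - 2, by omega⟩
  have hπ := Real.pi_pos
  have hk0 : (0:ℝ) ≤ (k:ℝ) := Nat.cast_nonneg k
  have hcast : ((k + 2 : ℕ) : ℝ) = (k : ℝ) + 2 := by push_cast; ring
  rw [hcast] at hI₁ hI₂ hα ⊢
  have hα' : -((k:ℝ) + 2) < 2 * α := by linarith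
  set q : ℝ := (k:ℝ) + 1 + 2 * α with hqe
  have hq : (-1:ℝ) < q := by rw [hqe]; linarith
  have hq2 : (-1:ℝ) < q + 2 := by linarith
  have hq1 : (0:ℝ) < q + 1 := by linarith
  -- clean up natural subtraction and exponents
  rw [show k + 2 - 2 = k by omega, show k + 2 - 1 = k + 1 by omega,
    show (k:ℝ) + 2 - 1 + 2 * α = q by rw [hqe]; ring] at hI₁
  rw [show k + 2 - 2 = k by omega, show k + 2 + 1 = k + 3 by omega,
    show (k:ℝ) + 2 + 1 + 2 * α = q + 2 by rw [hqe]; ring] at hI₂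
  -- the φ-integrals
  set S : ℝ := ∫ φ in (0:ℝ)..π, Real.sin φ ^ k with hSdef
  set C : ℝ := ∫ φ in (0:ℝ)..π, Real.sin φ ^ k * Real.cos φ ^ 2 with hCdef
  have hSpos : 0 < S := by rw [hSdef]; exact integral_sin_pow_pos k
  have hSC : ((k:ℝ) + 2) * C = S := by
    have e : ∀ φ : ℝ, Real.sin φ ^ k * Real.cos φ ^ 2
        = Real.sin φ ^ k - Real.sin φ ^ (k + 2) := by
      intro φ
      have h := Real.sin_sq_add_cos_sq φ
      rw [pow_add]
      linear_combination (Real.sin φ ^ k) * h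
    have hC1 : C = S - ∫ φ in (0:ℝ)..π, Real.sin φ ^ (k + 2) := by
      rw [hCdef]
      simp only [e]
      rw [intervalIntegral.integral_sub (f := fun φ => Real.sin φ ^ k) (g := fun φ => Real.sin φ ^ (k + 2)) ((Real.continuous_sin.pow k).intervalIntegrable _ _)
        ((Real.continuous_sin.pow (k + 2)).intervalIntegrable _ _)]
    have hsin2 : (∫ φ in (0:ℝ)..π, Real.sin φ ^ (k + 2))
        = ((k:ℝ) + 1) / ((k:ℝ) + 2) * S := by
      rw [integral_sin_pow k]
      simp [Real.sin_pi, hSdef]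
    rw [hC1, hsin2]
    field_simp
    ring
  have hCpos : 0 < C := by
    by_contra h
    push_neg at h
    nlinarith
  -- the θ-integrals
  have hIB : I₂ = ((k:ℝ) + 2 + α) ^ 2 * C * Jsc (k + 3) (q + 2) := by
    rw [hI₂, Jsc_def]
  have hinner : (∫ θ in (0:ℝ)..(π/2),
      (((k:ℝ) + 2 + α) * Real.cos θ ^ 2 - α) ^ 2 * Real.sin θ ^ (k + 1) * Real.cos θ ^ q)
      = ((k:ℝ) + 2 + α) ^ 2 * Jsc (k + 1) (q + 4)
        - 2 * α * ((k:ℝ) + 2 + α) * Jsc (k + 1) (q + 2)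
        + α ^ 2 * Jsc (k + 1) q := by
    have hcongr : (∫ θ in (0:ℝ)..(π/2),
        (((k:ℝ) + 2 + α) * Real.cos θ ^ 2 - α) ^ 2 * Real.sin θ ^ (k + 1) * Real.cos θ ^ q)
        = ∫ θ in (0:ℝ)..(π/2),
          (((k:ℝ) + 2 + α) ^ 2 * (Real.sin θ ^ (k + 1) * Real.cos θ ^ (q + 4))
            - 2 * α * ((k:ℝ) + 2 + α) * (Real.sin θ ^ (k + 1) * Real.cos θ ^ (q + 2))
            + α ^ 2 * (Real.sin θ ^ (k + 1) * Real.cos θ ^ q)) := by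
      apply intervalIntegral.integral_congr
      intro θ hθ
      rw [Set.uIcc_of_le (by linarith : (0:ℝ) ≤ π/2)] at hθ
      show (((k:ℝ) + 2 + α) * Real.cos θ ^ 2 - α) ^ 2 * Real.sin θ ^ (k + 1) * Real.cos θ ^ q
        = ((k:ℝ) + 2 + α) ^ 2 * (Real.sin θ ^ (k + 1) * Real.cos θ ^ (q + 4))
            - 2 * α * ((k:ℝ) + 2 + α) * (Real.sin θ ^ (k + 1) * Real.cos θ ^ (q + 2))
            + α ^ 2 * (Real.sin θ ^ (k + 1) * Real.cos θ ^ q)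
      have hcos : 0 ≤ Real.cos θ := Real.cos_nonneg_of_mem_Icc ⟨by linarith [hθ.1], hθ.2⟩
      rcases eq_or_lt_of_le hcos with he | hc
      · rw [← he]
        simp only [Real.zero_rpow (show q + 4 ≠ 0 by linarith),
          Real.zero_rpow (show q + 2 ≠ 0 by linarith)]
        ring_nf
      · have e2 : Real.cos θ ^ (q + 2) = Real.cos θ ^ q * Real.cos θ ^ 2 := by
          rw [Real.rpow_add hc, Real.rpow_two]
        have e4 : Real.cos θ ^ (q + 4) = Real.cos θ ^ q * Real.cos θ ^ 2 * Real.cos θ ^ 2 := by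
          rw [show q + 4 = (q + 2) + 2 by ring, Real.rpow_add hc, Real.rpow_two, e2]
        rw [e2, e4]
        ring
    rw [hcongr]
    rw [intervalIntegral.integral_add
      (((integrable_sc (k+1) (by linarith : (-1:ℝ) < q + 4)).const_mul _).sub
        ((integrable_sc (k+1) hq2).const_mul _))
      ((integrable_sc (k+1) hq).const_mul _),
      intervalIntegral.integral_sub ((integrable_sc (k+1) (by linarith : (-1:ℝ) < q + 4)).const_mul _)
        ((integrable_sc (k+1) hq2).const_mul _),
      intervalIntegral.integral_const_mul, intervalIntegral.integral_const_mul,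
      intervalIntegral.integral_const_mul, Jsc_def, Jsc_def, Jsc_def]
  have hIA : I₁ = S * (((k:ℝ) + 2 + α) ^ 2 * Jsc (k + 1) (q + 4)
      - 2 * α * ((k:ℝ) + 2 + α) * Jsc (k + 1) (q + 2) + α ^ 2 * Jsc (k + 1) q) := by
    rw [hI₁, hinner]
  -- recurrences
  have h1 : ((k:ℝ) + 1 + q + 2) * Jsc (k + 1) (q + 2) = (q + 1) * Jsc (k + 1) q := by
    have := Jsc_succ (k + 1) hq
    push_cast at this ⊢
    linear_combination this
  have h2 : ((k:ℝ) + 1 + (q + 2) + 2) * Jsc (k + 1) (q + 4) = (q + 3) * Jsc (k + 1) (q + 2) := by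
    have := Jsc_succ (k + 1) hq2
    rw [show q + 2 + 2 = q + 4 by ring] at this
    push_cast at this ⊢
    linear_combination this
  have h3 : Jsc (k + 3) (q + 2) = Jsc (k + 1) (q + 2) - Jsc (k + 1) (q + 4) := by
    have := Jsc_split (k + 1) hq2
    rw [show q + 2 + 2 = q + 4 by ring, show k + 1 + 2 = k + 3 by omega] at this
    exact this
  clear_value S C
  -- positivity
  have hA1pos : 0 < Jsc (k + 1) (q + 2) := Jsc_pos _ hq2
  have hJbpos : 0 < Jsc (k + 3) (q + 2) := Jsc_pos _ hq2
  have hKα : 0 < (k:ℝ) + 2 + α := by linarith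
  have hI₂pos : 0 < I₂ := by
    rw [hIB]
    exact mul_pos (mul_pos (pow_pos hKα 2) hCpos) hJbpos
  -- solved forms
  have hden2 : ((k:ℝ) + 1 + (q + 2) + 2) ≠ 0 := by
    have : (0:ℝ) < (k:ℝ) + 1 + (q + 2) + 2 := by rw [hqe]; linarith
    exact this.ne'
  have hA0 : Jsc (k + 1) q = ((k:ℝ) + 1 + q + 2) * Jsc (k + 1) (q + 2) / (q + 1) := by
    rw [eq_div_iff hq1.ne']
    linear_combination -h1
  have hA2 : Jsc (k + 1) (q + 4) = (q + 3) * Jsc (k + 1) (q + 2) / ((k:ℝ) + 1 + (q + 2) + 2) := by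
    rw [eq_div_iff hden2]
    linear_combination h2
  have hC2 : C = S / ((k:ℝ) + 2) := by
    rw [eq_div_iff (by positivity : ((k:ℝ) + 2) ≠ 0)]
    linear_combination hSC
  have hql : (0:ℝ) < (k:ℝ) + 2 + 2 * α := by linarith
  have hdiv : I₁ / I₂ = ((k:ℝ) + 2) * ((k:ℝ) + 2 + 2) / ((k:ℝ) + 2 + 2 * α) := by
    rw [div_eq_div_iff hI₂pos.ne' hql.ne']
    rw [hIA, hIB, h3, hA0, hA2, hC2]
    rw [show (k:ℝ) + 2 + 2 * α = q + 1 by rw [hqe]; ring,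
      show α = (q - (k:ℝ) - 1) / 2 by rw [hqe]; ring]
    have hd3 : ((k:ℝ) + 2) ≠ 0 := by positivity
    field_simp
    ring
  clear_value q
  clear hIA hIB hinner h1 h2 h3 hA0 hA2 hC2 hSC hSdef hCdef hI₁ hI₂
  refine ⟨hdiv, ?_⟩
  have hkey : I₁ = ((k:ℝ) + 2) * ((k:ℝ) + 2 + 2) / ((k:ℝ) + 2 + 2 * α) * I₂ :=
    (div_eq_iff hI₂pos.ne').mp hdiv
  constructor
  · intro hle
    rw [hkey] at hle
    have h'' : 1 ≤ ((k:ℝ) + 2) * ((k:ℝ) + 2 + 2) / ((k:ℝ) + 2 + 2 * α) :=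
      (le_mul_iff_one_le_left hI₂pos).mp hle
    have h3' : (k:ℝ) + 2 + 2 * α ≤ ((k:ℝ) + 2) * ((k:ℝ) + 2 + 2) := (one_le_div hql).mp h''
    nlinarith [h3']
  · intro hle
    have h3' : (k:ℝ) + 2 + 2 * α ≤ ((k:ℝ) + 2) * ((k:ℝ) + 2 + 2) := by nlinarith [hle]
    have h'' : 1 ≤ ((k:ℝ) + 2) * ((k:ℝ) + 2 + 2) / ((k:ℝ) + 2 + 2 * α) := (one_le_div hql).mpr h3'
    rw [hkey]
    exact (le_mul_iff_one_le_left hI₂pos).mpr h''
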